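/- With f and g as in the main theorem, for every integer n ≥ 14 and every r ∈ {4, 5, 6} with n - r - 2 ≥ 1: binom(r-1,2)·f(n-r) + (r-1)·f(n-r-1) + g(n-r-2) < f(n). -/
import Mathlib


/-- `g n = 10 ^ (n/5)` (real power). -/
noncomputable def g (n : ℕ) : ℝ := (10 : ℝ) ^ ((n : ℝ) / 5)

/-- The four-piece function `f` from the main theorem. -/
noncomputable def f (n : ℕ) : ℝ :=
  if n ≤ 8 then (n.choose 2 : ℝ)
  else if n ≤ 13 then
    ((n / 2).choose 2 : ℝ) * (((n + 1) / 2).choose 2 : ℝ)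
      - (((n / 2 : ℕ) : ℝ) - 1) * ((((n + 1) / 2 : ℕ) : ℝ) - 1) + 1
  else if n ≤ 30 then
    (10 : ℝ) ^ (((n : ℝ) - 1) / 5) + (((n : ℝ) + 144) / 30) * (6 : ℝ) ^ (((n : ℝ) - 6) / 5)
  else
    (10 : ℝ) ^ (((n : ℝ) - 1) / 5) + (((n : ℝ) - 1) / 5) * (6 : ℝ) ^ (((n : ℝ) - 6) / 5)

/-- `AA = 10^(1/5)`. -/
noncomputable def AA : ℝ := (10:ℝ) ^ ((1:ℝ)/5)
/-- `BB = 6^(1/5)`. -/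
noncomputable def BB : ℝ := (6:ℝ) ^ ((1:ℝ)/5)

lemma hA0 : (0:ℝ) < AA := Real.rpow_pos_of_pos (by norm_num) _
lemma hB0 : (0:ℝ) < BB := Real.rpow_pos_of_pos (by norm_num) _

lemma tenA (k : ℕ) : (10:ℝ) ^ ((k:ℝ)/5) = AA ^ k := by
  rw [AA, ← Real.rpow_natCast ((10:ℝ) ^ ((1:ℝ)/5)) k,
    ← Real.rpow_mul (by norm_num : (0:ℝ) ≤ 10)]
  congr 1
  ring

lemma sixB (k : ℕ) : (6:ℝ) ^ ((k:ℝ)/5) = BB ^ k := by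
  rw [BB, ← Real.rpow_natCast ((6:ℝ) ^ ((1:ℝ)/5)) k,
    ← Real.rpow_mul (by norm_num : (0:ℝ) ≤ 6)]
  congr 1
  ring

lemma hA5 : AA^5 = 10 := by
  have h := tenA 5
  norm_num at h
  exact h.symm

lemma hB5 : BB^5 = 6 := by
  have h := sixB 5
  norm_num at h
  exact h.symm

lemma g_val (m : ℕ) : g m = AA ^ m := by rw [g, tenA]

lemma f_mid (m : ℕ) (h1 : 14 ≤ m) (h2 : m ≤ 30) :
    f m = AA^(m-1) + ((m:ℝ)+144)/30 * BB^(m-6) := by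
  have e1 : ((m:ℝ)-1)/5 = ((m-1:ℕ):ℝ)/5 := by
    rw [Nat.cast_sub (by omega)]; norm_num
  have e6 : ((m:ℝ)-6)/5 = ((m-6:ℕ):ℝ)/5 := by
    rw [Nat.cast_sub (by omega)]; norm_num
  rw [f, if_neg (by omega), if_neg (by omega), if_pos (by omega), e1, e6, tenA, sixB]

lemma f_hi (m : ℕ) (h1 : 31 ≤ m) :
    f m = AA^(m-1) + ((m:ℝ)-1)/5 * BB^(m-6) := by
  have e1 : ((m:ℝ)-1)/5 = ((m-1:ℕ):ℝ)/5 := by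
    rw [Nat.cast_sub (by omega)]; norm_num
  have e6 : ((m:ℝ)-6)/5 = ((m-6:ℕ):ℝ)/5 := by
    rw [Nat.cast_sub (by omega)]; norm_num
  rw [f, if_neg (by omega), if_neg (by omega), if_neg (by omega)]
  rw [e1, e6, tenA, sixB, ← e1]

lemma hA1l : (15848/10000:ℝ) < AA := by
  refine lt_of_pow_lt_pow_left₀ 5 hA0.le ?_
  rw [hA5]
  norm_num

lemma hA1u : AA < (15849/10000:ℝ) := by
  refine lt_of_pow_lt_pow_left₀ 5 (by norm_num) ?_
  rw [hA5]
  norm_num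

lemma hAp2 : (AA^2)^5 = 100 := by
  have h : (AA^2)^5 = (AA^5)^2 := by ring
  rw [h, hA5]
  norm_num

lemma hA2l : (25118/10000:ℝ) < AA^2 := by
  refine lt_of_pow_lt_pow_left₀ 5 (pow_pos hA0 2).le ?_
  rw [hAp2]
  norm_num

lemma hA2u : AA^2 < (25120/10000:ℝ) := by
  refine lt_of_pow_lt_pow_left₀ 5 (by norm_num) ?_
  rw [hAp2]
  norm_num

lemma hAp3 : (AA^3)^5 = 1000 := by
  have h : (AA^3)^5 = (AA^5)^3 := by ring
  rw [h, hA5]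
  norm_num

lemma hA3l : (39810/10000:ℝ) < AA^3 := by
  refine lt_of_pow_lt_pow_left₀ 5 (pow_pos hA0 3).le ?_
  rw [hAp3]
  norm_num

lemma hA3u : AA^3 < (39811/10000:ℝ) := by
  refine lt_of_pow_lt_pow_left₀ 5 (by norm_num) ?_
  rw [hAp3]
  norm_num

lemma hAp4 : (AA^4)^5 = 10000 := by
  have h : (AA^4)^5 = (AA^5)^4 := by ring
  rw [h, hA5]
  norm_num

lemma hA4l : (63095/10000:ℝ) < AA^4 := by
  refine lt_of_pow_lt_pow_left₀ 5 (pow_pos hA0 4).le ?_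
  rw [hAp4]
  norm_num

lemma hA4u : AA^4 < (63096/10000:ℝ) := by
  refine lt_of_pow_lt_pow_left₀ 5 (by norm_num) ?_
  rw [hAp4]
  norm_num

lemma hB1l : (14309/10000:ℝ) < BB := by
  refine lt_of_pow_lt_pow_left₀ 5 hB0.le ?_
  rw [hB5]
  norm_num

lemma hB1u : BB < (14310/10000:ℝ) := by
  refine lt_of_pow_lt_pow_left₀ 5 (by norm_num) ?_
  rw [hB5]
  norm_num

lemma hBp2 : (BB^2)^5 = 36 := by
  have h : (BB^2)^5 = (BB^5)^2 := by ring
  rw [h, hB5]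
  norm_num

lemma hB2l : (20476/10000:ℝ) < BB^2 := by
  refine lt_of_pow_lt_pow_left₀ 5 (pow_pos hB0 2).le ?_
  rw [hBp2]
  norm_num

lemma hB2u : BB^2 < (20477/10000:ℝ) := by
  refine lt_of_pow_lt_pow_left₀ 5 (by norm_num) ?_
  rw [hBp2]
  norm_num

lemma hBp3 : (BB^3)^5 = 216 := by
  have h : (BB^3)^5 = (BB^5)^3 := by ring
  rw [h, hB5]
  norm_num

lemma hB3l : (29301/10000:ℝ) < BB^3 := by
  refine lt_of_pow_lt_pow_left₀ 5 (pow_pos hB0 3).le ?_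
  rw [hBp3]
  norm_num

lemma hB3u : BB^3 < (29302/10000:ℝ) := by
  refine lt_of_pow_lt_pow_left₀ 5 (by norm_num) ?_
  rw [hBp3]
  norm_num

lemma hBp4 : (BB^4)^5 = 1296 := by
  have h : (BB^4)^5 = (BB^5)^4 := by ring
  rw [h, hB5]
  norm_num

lemma hB4l : (41929/10000:ℝ) < BB^4 := by
  refine lt_of_pow_lt_pow_left₀ 5 (pow_pos hB0 4).le ?_
  rw [hBp4]
  norm_num

lemma hB4u : BB^4 < (41930/10000:ℝ) := by
  refine lt_of_pow_lt_pow_left₀ 5 (by norm_num) ?_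
  rw [hBp4]
  norm_num

lemma Apow6 : AA^6 = 10*AA := by
  have h : AA^6 = (AA^5)^1*AA^1 := by ring
  rw [h, hA5]
  norm_num

lemma Apow7 : AA^7 = 10*AA^2 := by
  have h : AA^7 = (AA^5)^1*AA^2 := by ring
  rw [h, hA5]
  norm_num

lemma Apow8 : AA^8 = 10*AA^3 := by
  have h : AA^8 = (AA^5)^1*AA^3 := by ring
  rw [h, hA5]
  norm_num

lemma Apow9 : AA^9 = 10*AA^4 := by
  have h : AA^9 = (AA^5)^1*AA^4 := by ring
  rw [h, hA5]
  norm_num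

lemma Apow10 : AA^10 = 100 := by
  have h : AA^10 = (AA^5)^2 := by ring
  rw [h, hA5]
  norm_num

lemma Apow11 : AA^11 = 100*AA := by
  have h : AA^11 = (AA^5)^2*AA^1 := by ring
  rw [h, hA5]
  norm_num

lemma Apow12 : AA^12 = 100*AA^2 := by
  have h : AA^12 = (AA^5)^2*AA^2 := by ring
  rw [h, hA5]
  norm_num

lemma Apow13 : AA^13 = 100*AA^3 := by
  have h : AA^13 = (AA^5)^2*AA^3 := by ring
  rw [h, hA5]
  norm_num

lemma Apow14 : AA^14 = 100*AA^4 := by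
  have h : AA^14 = (AA^5)^2*AA^4 := by ring
  rw [h, hA5]
  norm_num

lemma Apow15 : AA^15 = 1000 := by
  have h : AA^15 = (AA^5)^3 := by ring
  rw [h, hA5]
  norm_num

lemma Apow16 : AA^16 = 1000*AA := by
  have h : AA^16 = (AA^5)^3*AA^1 := by ring
  rw [h, hA5]
  norm_num

lemma Apow17 : AA^17 = 1000*AA^2 := by
  have h : AA^17 = (AA^5)^3*AA^2 := by ring
  rw [h, hA5]
  norm_num

lemma Apow18 : AA^18 = 1000*AA^3 := by
  have h : AA^18 = (AA^5)^3*AA^3 := by ring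
  rw [h, hA5]
  norm_num

lemma Apow19 : AA^19 = 1000*AA^4 := by
  have h : AA^19 = (AA^5)^3*AA^4 := by ring
  rw [h, hA5]
  norm_num

lemma Apow20 : AA^20 = 10000 := by
  have h : AA^20 = (AA^5)^4 := by ring
  rw [h, hA5]
  norm_num

lemma Apow21 : AA^21 = 10000*AA := by
  have h : AA^21 = (AA^5)^4*AA^1 := by ring
  rw [h, hA5]
  norm_num

lemma Apow22 : AA^22 = 10000*AA^2 := by
  have h : AA^22 = (AA^5)^4*AA^2 := by ring
  rw [h, hA5]
  norm_num

lemma Apow23 : AA^23 = 10000*AA^3 := by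
  have h : AA^23 = (AA^5)^4*AA^3 := by ring
  rw [h, hA5]
  norm_num

lemma Apow24 : AA^24 = 10000*AA^4 := by
  have h : AA^24 = (AA^5)^4*AA^4 := by ring
  rw [h, hA5]
  norm_num

lemma Apow25 : AA^25 = 100000 := by
  have h : AA^25 = (AA^5)^5 := by ring
  rw [h, hA5]
  norm_num

lemma Apow26 : AA^26 = 100000*AA := by
  have h : AA^26 = (AA^5)^5*AA^1 := by ring
  rw [h, hA5]
  norm_num

lemma Apow27 : AA^27 = 100000*AA^2 := by
  have h : AA^27 = (AA^5)^5*AA^2 := by ring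
  rw [h, hA5]
  norm_num

lemma Apow28 : AA^28 = 100000*AA^3 := by
  have h : AA^28 = (AA^5)^5*AA^3 := by ring
  rw [h, hA5]
  norm_num

lemma Apow29 : AA^29 = 100000*AA^4 := by
  have h : AA^29 = (AA^5)^5*AA^4 := by ring
  rw [h, hA5]
  norm_num

lemma Apow30 : AA^30 = 1000000 := by
  have h : AA^30 = (AA^5)^6 := by ring
  rw [h, hA5]
  norm_num

lemma Apow31 : AA^31 = 1000000*AA := by
  have h : AA^31 = (AA^5)^6*AA^1 := by ring
  rw [h, hA5]
  norm_num

lemma Apow32 : AA^32 = 1000000*AA^2 := by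
  have h : AA^32 = (AA^5)^6*AA^2 := by ring
  rw [h, hA5]
  norm_num

lemma Apow33 : AA^33 = 1000000*AA^3 := by
  have h : AA^33 = (AA^5)^6*AA^3 := by ring
  rw [h, hA5]
  norm_num

lemma Apow34 : AA^34 = 1000000*AA^4 := by
  have h : AA^34 = (AA^5)^6*AA^4 := by ring
  rw [h, hA5]
  norm_num

lemma Apow35 : AA^35 = 10000000 := by
  have h : AA^35 = (AA^5)^7 := by ring
  rw [h, hA5]
  norm_num

lemma Apow36 : AA^36 = 10000000*AA := by
  have h : AA^36 = (AA^5)^7*AA^1 := by ring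
  rw [h, hA5]
  norm_num

lemma Apow37 : AA^37 = 10000000*AA^2 := by
  have h : AA^37 = (AA^5)^7*AA^2 := by ring
  rw [h, hA5]
  norm_num

lemma Bpow8 : BB^8 = 6*BB^3 := by
  have h : BB^8 = (BB^5)^1*BB^3 := by ring
  rw [h, hB5]
  norm_num

lemma Bpow9 : BB^9 = 6*BB^4 := by
  have h : BB^9 = (BB^5)^1*BB^4 := by ring
  rw [h, hB5]
  norm_num

lemma Bpow10 : BB^10 = 36 := by
  have h : BB^10 = (BB^5)^2 := by ring
  rw [h, hB5]
  norm_num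

lemma Bpow11 : BB^11 = 36*BB := by
  have h : BB^11 = (BB^5)^2*BB^1 := by ring
  rw [h, hB5]
  norm_num

lemma Bpow12 : BB^12 = 36*BB^2 := by
  have h : BB^12 = (BB^5)^2*BB^2 := by ring
  rw [h, hB5]
  norm_num

lemma Bpow13 : BB^13 = 36*BB^3 := by
  have h : BB^13 = (BB^5)^2*BB^3 := by ring
  rw [h, hB5]
  norm_num

lemma Bpow14 : BB^14 = 36*BB^4 := by
  have h : BB^14 = (BB^5)^2*BB^4 := by ring
  rw [h, hB5]
  norm_num

lemma Bpow15 : BB^15 = 216 := by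
  have h : BB^15 = (BB^5)^3 := by ring
  rw [h, hB5]
  norm_num

lemma Bpow16 : BB^16 = 216*BB := by
  have h : BB^16 = (BB^5)^3*BB^1 := by ring
  rw [h, hB5]
  norm_num

lemma Bpow17 : BB^17 = 216*BB^2 := by
  have h : BB^17 = (BB^5)^3*BB^2 := by ring
  rw [h, hB5]
  norm_num

lemma Bpow18 : BB^18 = 216*BB^3 := by
  have h : BB^18 = (BB^5)^3*BB^3 := by ring
  rw [h, hB5]
  norm_num

lemma Bpow19 : BB^19 = 216*BB^4 := by
  have h : BB^19 = (BB^5)^3*BB^4 := by ring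
  rw [h, hB5]
  norm_num

lemma Bpow20 : BB^20 = 1296 := by
  have h : BB^20 = (BB^5)^4 := by ring
  rw [h, hB5]
  norm_num

lemma Bpow21 : BB^21 = 1296*BB := by
  have h : BB^21 = (BB^5)^4*BB^1 := by ring
  rw [h, hB5]
  norm_num

lemma Bpow22 : BB^22 = 1296*BB^2 := by
  have h : BB^22 = (BB^5)^4*BB^2 := by ring
  rw [h, hB5]
  norm_num

lemma Bpow23 : BB^23 = 1296*BB^3 := by
  have h : BB^23 = (BB^5)^4*BB^3 := by ring
  rw [h, hB5]
  norm_num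

lemma Bpow24 : BB^24 = 1296*BB^4 := by
  have h : BB^24 = (BB^5)^4*BB^4 := by ring
  rw [h, hB5]
  norm_num

lemma Bpow25 : BB^25 = 7776 := by
  have h : BB^25 = (BB^5)^5 := by ring
  rw [h, hB5]
  norm_num

lemma Bpow26 : BB^26 = 7776*BB := by
  have h : BB^26 = (BB^5)^5*BB^1 := by ring
  rw [h, hB5]
  norm_num

lemma Bpow27 : BB^27 = 7776*BB^2 := by
  have h : BB^27 = (BB^5)^5*BB^2 := by ring
  rw [h, hB5]
  norm_num

lemma Bpow28 : BB^28 = 7776*BB^3 := by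
  have h : BB^28 = (BB^5)^5*BB^3 := by ring
  rw [h, hB5]
  norm_num

lemma Bpow29 : BB^29 = 7776*BB^4 := by
  have h : BB^29 = (BB^5)^5*BB^4 := by ring
  rw [h, hB5]
  norm_num

lemma Bpow30 : BB^30 = 46656 := by
  have h : BB^30 = (BB^5)^6 := by ring
  rw [h, hB5]
  norm_num

lemma Bpow31 : BB^31 = 46656*BB := by
  have h : BB^31 = (BB^5)^6*BB^1 := by ring
  rw [h, hB5]
  norm_num

lemma Bpow32 : BB^32 = 46656*BB^2 := by
  have h : BB^32 = (BB^5)^6*BB^2 := by ring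
  rw [h, hB5]
  norm_num
lemma fval7 : f 7 = 21 := by norm_num [f, Nat.choose]

lemma fval8 : f 8 = 28 := by norm_num [f, Nat.choose]

lemma fval9 : f 9 = 49 := by norm_num [f, Nat.choose]

lemma fval10 : f 10 = 85 := by norm_num [f, Nat.choose]

lemma fval11 : f 11 = 131 := by norm_num [f, Nat.choose]

lemma fval12 : f 12 = 201 := by norm_num [f, Nat.choose]

lemma fval13 : f 13 = 286 := by norm_num [f, Nat.choose]

lemma fval14 : f 14 = 100*AA^3 + (158/5)*BB^3 := by
  rw [f_mid 14 (by norm_num) (by norm_num)]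
  rw [show (14-1:ℕ) = 13 from rfl, show (14-6:ℕ) = 8 from rfl, Apow13, Bpow8]
  push_cast
  ring

lemma fval15 : f 15 = 100*AA^4 + (159/5)*BB^4 := by
  rw [f_mid 15 (by norm_num) (by norm_num)]
  rw [show (15-1:ℕ) = 14 from rfl, show (15-6:ℕ) = 9 from rfl, Apow14, Bpow9]
  push_cast
  ring

lemma fval16 : f 16 = 1000 + 192 := by
  rw [f_mid 16 (by norm_num) (by norm_num)]
  rw [show (16-1:ℕ) = 15 from rfl, show (16-6:ℕ) = 10 from rfl, Apow15, Bpow10]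
  push_cast
  ring

lemma fval17 : f 17 = 1000*AA + (966/5)*BB := by
  rw [f_mid 17 (by norm_num) (by norm_num)]
  rw [show (17-1:ℕ) = 16 from rfl, show (17-6:ℕ) = 11 from rfl, Apow16, Bpow11]
  push_cast
  ring

lemma fval18 : f 18 = 1000*AA^2 + (972/5)*BB^2 := by
  rw [f_mid 18 (by norm_num) (by norm_num)]
  rw [show (18-1:ℕ) = 17 from rfl, show (18-6:ℕ) = 12 from rfl, Apow17, Bpow12]
  push_cast
  ring

lemma fval19 : f 19 = 1000*AA^3 + (978/5)*BB^3 := by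
  rw [f_mid 19 (by norm_num) (by norm_num)]
  rw [show (19-1:ℕ) = 18 from rfl, show (19-6:ℕ) = 13 from rfl, Apow18, Bpow13]
  push_cast
  ring

lemma fval20 : f 20 = 1000*AA^4 + (984/5)*BB^4 := by
  rw [f_mid 20 (by norm_num) (by norm_num)]
  rw [show (20-1:ℕ) = 19 from rfl, show (20-6:ℕ) = 14 from rfl, Apow19, Bpow14]
  push_cast
  ring

lemma fval21 : f 21 = 10000 + 1188 := by
  rw [f_mid 21 (by norm_num) (by norm_num)]
  rw [show (21-1:ℕ) = 20 from rfl, show (21-6:ℕ) = 15 from rfl, Apow20, Bpow15]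
  push_cast
  ring

lemma fval22 : f 22 = 10000*AA + (5976/5)*BB := by
  rw [f_mid 22 (by norm_num) (by norm_num)]
  rw [show (22-1:ℕ) = 21 from rfl, show (22-6:ℕ) = 16 from rfl, Apow21, Bpow16]
  push_cast
  ring

lemma fval23 : f 23 = 10000*AA^2 + (6012/5)*BB^2 := by
  rw [f_mid 23 (by norm_num) (by norm_num)]
  rw [show (23-1:ℕ) = 22 from rfl, show (23-6:ℕ) = 17 from rfl, Apow22, Bpow17]
  push_cast
  ring

lemma fval24 : f 24 = 10000*AA^3 + (6048/5)*BB^3 := by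
  rw [f_mid 24 (by norm_num) (by norm_num)]
  rw [show (24-1:ℕ) = 23 from rfl, show (24-6:ℕ) = 18 from rfl, Apow23, Bpow18]
  push_cast
  ring

lemma fval25 : f 25 = 10000*AA^4 + (6084/5)*BB^4 := by
  rw [f_mid 25 (by norm_num) (by norm_num)]
  rw [show (25-1:ℕ) = 24 from rfl, show (25-6:ℕ) = 19 from rfl, Apow24, Bpow19]
  push_cast
  ring

lemma fval26 : f 26 = 100000 + 7344 := by
  rw [f_mid 26 (by norm_num) (by norm_num)]
  rw [show (26-1:ℕ) = 25 from rfl, show (26-6:ℕ) = 20 from rfl, Apow25, Bpow20]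
  push_cast
  ring

lemma fval27 : f 27 = 100000*AA + (36936/5)*BB := by
  rw [f_mid 27 (by norm_num) (by norm_num)]
  rw [show (27-1:ℕ) = 26 from rfl, show (27-6:ℕ) = 21 from rfl, Apow26, Bpow21]
  push_cast
  ring

lemma fval28 : f 28 = 100000*AA^2 + (37152/5)*BB^2 := by
  rw [f_mid 28 (by norm_num) (by norm_num)]
  rw [show (28-1:ℕ) = 27 from rfl, show (28-6:ℕ) = 22 from rfl, Apow27, Bpow22]
  push_cast
  ring

lemma fval29 : f 29 = 100000*AA^3 + (37368/5)*BB^3 := by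
  rw [f_mid 29 (by norm_num) (by norm_num)]
  rw [show (29-1:ℕ) = 28 from rfl, show (29-6:ℕ) = 23 from rfl, Apow28, Bpow23]
  push_cast
  ring

lemma fval30 : f 30 = 100000*AA^4 + (37584/5)*BB^4 := by
  rw [f_mid 30 (by norm_num) (by norm_num)]
  rw [show (30-1:ℕ) = 29 from rfl, show (30-6:ℕ) = 24 from rfl, Apow29, Bpow24]
  push_cast
  ring

lemma fval31 : f 31 = 1000000 + 46656 := by
  rw [f_hi 31 (by norm_num)]
  rw [show (31-1:ℕ) = 30 from rfl, show (31-6:ℕ) = 25 from rfl, Apow30, Bpow25]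
  push_cast
  ring

lemma fval32 : f 32 = 1000000*AA + (241056/5)*BB := by
  rw [f_hi 32 (by norm_num)]
  rw [show (32-1:ℕ) = 31 from rfl, show (32-6:ℕ) = 26 from rfl, Apow31, Bpow26]
  push_cast
  ring

lemma fval33 : f 33 = 1000000*AA^2 + (248832/5)*BB^2 := by
  rw [f_hi 33 (by norm_num)]
  rw [show (33-1:ℕ) = 32 from rfl, show (33-6:ℕ) = 27 from rfl, Apow32, Bpow27]
  push_cast
  ring

lemma fval34 : f 34 = 1000000*AA^3 + (256608/5)*BB^3 := by
  rw [f_hi 34 (by norm_num)]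
  rw [show (34-1:ℕ) = 33 from rfl, show (34-6:ℕ) = 28 from rfl, Apow33, Bpow28]
  push_cast
  ring

lemma fval35 : f 35 = 1000000*AA^4 + (264384/5)*BB^4 := by
  rw [f_hi 35 (by norm_num)]
  rw [show (35-1:ℕ) = 34 from rfl, show (35-6:ℕ) = 29 from rfl, Apow34, Bpow29]
  push_cast
  ring

lemma fval36 : f 36 = 10000000 + 326592 := by
  rw [f_hi 36 (by norm_num)]
  rw [show (36-1:ℕ) = 35 from rfl, show (36-6:ℕ) = 30 from rfl, Apow35, Bpow30]
  push_cast
  ring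

lemma fval37 : f 37 = 10000000*AA + (1679616/5)*BB := by
  rw [f_hi 37 (by norm_num)]
  rw [show (37-1:ℕ) = 36 from rfl, show (37-6:ℕ) = 31 from rfl, Apow36, Bpow31]
  push_cast
  ring

lemma gval6 : g 6 = 10*AA := by
  rw [g_val, Apow6]

lemma gval7 : g 7 = 10*AA^2 := by
  rw [g_val, Apow7]

lemma gval8 : g 8 = 10*AA^3 := by
  rw [g_val, Apow8]

lemma gval9 : g 9 = 10*AA^4 := by
  rw [g_val, Apow9]

lemma gval10 : g 10 = 100 := by
  rw [g_val, Apow10]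

lemma gval11 : g 11 = 100*AA := by
  rw [g_val, Apow11]

lemma gval12 : g 12 = 100*AA^2 := by
  rw [g_val, Apow12]

lemma gval13 : g 13 = 100*AA^3 := by
  rw [g_val, Apow13]

lemma gval14 : g 14 = 100*AA^4 := by
  rw [g_val, Apow14]

lemma gval15 : g 15 = 1000 := by
  rw [g_val, Apow15]

lemma gval16 : g 16 = 1000*AA := by
  rw [g_val, Apow16]

lemma gval17 : g 17 = 1000*AA^2 := by
  rw [g_val, Apow17]

lemma gval18 : g 18 = 1000*AA^3 := by
  rw [g_val, Apow18]

lemma gval19 : g 19 = 1000*AA^4 := by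
  rw [g_val, Apow19]

lemma gval20 : g 20 = 10000 := by
  rw [g_val, Apow20]

lemma gval21 : g 21 = 10000*AA := by
  rw [g_val, Apow21]

lemma gval22 : g 22 = 10000*AA^2 := by
  rw [g_val, Apow22]

lemma gval23 : g 23 = 10000*AA^3 := by
  rw [g_val, Apow23]

lemma gval24 : g 24 = 10000*AA^4 := by
  rw [g_val, Apow24]

lemma gval25 : g 25 = 100000 := by
  rw [g_val, Apow25]

lemma gval26 : g 26 = 100000*AA := by
  rw [g_val, Apow26]

lemma gval27 : g 27 = 100000*AA^2 := by
  rw [g_val, Apow27]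

lemma gval28 : g 28 = 100000*AA^3 := by
  rw [g_val, Apow28]

lemma gval29 : g 29 = 100000*AA^4 := by
  rw [g_val, Apow29]

lemma gval30 : g 30 = 1000000 := by
  rw [g_val, Apow30]

lemma gval31 : g 31 = 1000000*AA := by
  rw [g_val, Apow31]

lemma gen4 (n : ℕ) (hn : 38 ≤ n) :
    3 * f (n-4) + 3 * f (n-4-1) + g (n-4-2) < f n := by
  obtain ⟨k, rfl⟩ : ∃ k, n = k + 38 := ⟨n - 38, by omega⟩
  rw [show k+38-4-2 = k+32 from by omega, show k+38-4-1 = k+33 from by omega, show k+38-4 = k+34 from by omega]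
  rw [f_hi (k+34) (by omega), f_hi (k+33) (by omega), f_hi (k+38) (by omega), g_val]
  rw [show k+34-1 = k+33 from by omega, show k+34-6 = k+28 from by omega, show k+33-1 = k+32 from by omega, show k+33-6 = k+27 from by omega, show k+38-1 = k+37 from by omega, show k+38-6 = k+32 from by omega]
  rw [pow_add AA k 32, pow_add AA k 33, pow_add AA k 37, pow_add BB k 27, pow_add BB k 28, pow_add BB k 32]
  rw [Apow32, Apow33, Apow37, Bpow27, Bpow28, Bpow32]
  have hU : (0:ℝ) < AA^k := pow_pos hA0 k
  have hV : (0:ℝ) < BB^k := pow_pos hB0 k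
  have hk : (0:ℝ) ≤ (k:ℝ) := Nat.cast_nonneg k
  have hkV : (0:ℝ) ≤ (k:ℝ) * BB^k := mul_nonneg hk hV.le
  have hXY : (1 + (k:ℝ)/10) * BB^k ≤ AA^k := by
    have h1 : ((11/10:ℝ)*BB)^k ≤ AA^k := by
      refine pow_le_pow_left₀ (mul_nonneg (by norm_num) hB0.le) ?_ k
      nlinarith [hB1u, hA1l]
    have h2 : (1 + (k:ℝ)*(1/10)) ≤ ((11/10:ℝ))^k := by
      have h := one_add_mul_le_pow (by norm_num : (-2:ℝ) ≤ (1/10:ℝ)) k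
      calc (1 + (k:ℝ)*(1/10)) ≤ (1+(1/10:ℝ))^k := h
        _ = ((11/10:ℝ))^k := by norm_num
    calc (1 + (k:ℝ)/10) * BB^k ≤ ((11/10:ℝ))^k * BB^k := by
          refine mul_le_mul_of_nonneg_right ?_ hV.le
          linarith
      _ = ((11/10:ℝ)*BB)^k := (mul_pow _ _ _).symm
      _ ≤ AA^k := h1
  push_cast
  nlinarith [mul_le_mul_of_nonneg_right hXY (by norm_num : (0:ℝ) ≤ 2000000),
    hU.le, hV.le, hk, hkV,
    mul_lt_mul_of_pos_right hA2l hU, mul_lt_mul_of_pos_right hA1u hU,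
    mul_lt_mul_of_pos_right hA3u hU, mul_lt_mul_of_pos_right hA2u hU,
    mul_lt_mul_of_pos_right hB1u hV, mul_lt_mul_of_pos_right hB2l hV,
    mul_lt_mul_of_pos_right hB2u hV, mul_lt_mul_of_pos_right hB3u hV,
    mul_le_mul_of_nonneg_left hB1u.le hkV, mul_le_mul_of_nonneg_left hB2u.le hkV,
    mul_le_mul_of_nonneg_left hB2l.le hkV, mul_le_mul_of_nonneg_left hB3u.le hkV]

lemma gen5 (n : ℕ) (hn : 38 ≤ n) :
    6 * f (n-5) + 4 * f (n-5-1) + g (n-5-2) < f n := by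
  obtain ⟨k, rfl⟩ : ∃ k, n = k + 38 := ⟨n - 38, by omega⟩
  rw [show k+38-5-2 = k+31 from by omega, show k+38-5-1 = k+32 from by omega, show k+38-5 = k+33 from by omega]
  rw [f_hi (k+33) (by omega), f_hi (k+32) (by omega), f_hi (k+38) (by omega), g_val]
  rw [show k+33-1 = k+32 from by omega, show k+33-6 = k+27 from by omega, show k+32-1 = k+31 from by omega, show k+32-6 = k+26 from by omega, show k+38-1 = k+37 from by omega, show k+38-6 = k+32 from by omega]
  rw [pow_add AA k 31, pow_add AA k 32, pow_add AA k 37, pow_add BB k 26, pow_add BB k 27, pow_add BB k 32]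
  rw [Apow31, Apow32, Apow37, Bpow26, Bpow27, Bpow32]
  have hU : (0:ℝ) < AA^k := pow_pos hA0 k
  have hV : (0:ℝ) < BB^k := pow_pos hB0 k
  have hk : (0:ℝ) ≤ (k:ℝ) := Nat.cast_nonneg k
  have hkV : (0:ℝ) ≤ (k:ℝ) * BB^k := mul_nonneg hk hV.le
  have hXY : (1 + (k:ℝ)/10) * BB^k ≤ AA^k := by
    have h1 : ((11/10:ℝ)*BB)^k ≤ AA^k := by
      refine pow_le_pow_left₀ (mul_nonneg (by norm_num) hB0.le) ?_ k
      nlinarith [hB1u, hA1l]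
    have h2 : (1 + (k:ℝ)*(1/10)) ≤ ((11/10:ℝ))^k := by
      have h := one_add_mul_le_pow (by norm_num : (-2:ℝ) ≤ (1/10:ℝ)) k
      calc (1 + (k:ℝ)*(1/10)) ≤ (1+(1/10:ℝ))^k := h
        _ = ((11/10:ℝ))^k := by norm_num
    calc (1 + (k:ℝ)/10) * BB^k ≤ ((11/10:ℝ))^k * BB^k := by
          refine mul_le_mul_of_nonneg_right ?_ hV.le
          linarith
      _ = ((11/10:ℝ)*BB)^k := (mul_pow _ _ _).symm
      _ ≤ AA^k := h1
  push_cast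
  nlinarith [mul_le_mul_of_nonneg_right hXY (by norm_num : (0:ℝ) ≤ 2000000),
    hU.le, hV.le, hk, hkV,
    mul_lt_mul_of_pos_right hA2l hU, mul_lt_mul_of_pos_right hA1u hU,
    mul_lt_mul_of_pos_right hA3u hU, mul_lt_mul_of_pos_right hA2u hU,
    mul_lt_mul_of_pos_right hB1u hV, mul_lt_mul_of_pos_right hB2l hV,
    mul_lt_mul_of_pos_right hB2u hV, mul_lt_mul_of_pos_right hB3u hV,
    mul_le_mul_of_nonneg_left hB1u.le hkV, mul_le_mul_of_nonneg_left hB2u.le hkV,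
    mul_le_mul_of_nonneg_left hB2l.le hkV, mul_le_mul_of_nonneg_left hB3u.le hkV]

lemma gen6 (n : ℕ) (hn : 38 ≤ n) :
    10 * f (n-6) + 5 * f (n-6-1) + g (n-6-2) < f n := by
  obtain ⟨k, rfl⟩ : ∃ k, n = k + 38 := ⟨n - 38, by omega⟩
  rw [show k+38-6-2 = k+30 from by omega, show k+38-6-1 = k+31 from by omega, show k+38-6 = k+32 from by omega]
  rw [f_hi (k+32) (by omega), f_hi (k+31) (by omega), f_hi (k+38) (by omega), g_val]
  rw [show k+32-1 = k+31 from by omega, show k+32-6 = k+26 from by omega, show k+31-1 = k+30 from by omega, show k+31-6 = k+25 from by omega, show k+38-1 = k+37 from by omega, show k+38-6 = k+32 from by omega]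
  rw [pow_add AA k 30, pow_add AA k 31, pow_add AA k 37, pow_add BB k 25, pow_add BB k 26, pow_add BB k 32]
  rw [Apow30, Apow31, Apow37, Bpow25, Bpow26, Bpow32]
  have hU : (0:ℝ) < AA^k := pow_pos hA0 k
  have hV : (0:ℝ) < BB^k := pow_pos hB0 k
  have hk : (0:ℝ) ≤ (k:ℝ) := Nat.cast_nonneg k
  have hkV : (0:ℝ) ≤ (k:ℝ) * BB^k := mul_nonneg hk hV.le
  have hXY : (1 + (k:ℝ)/10) * BB^k ≤ AA^k := by
    have h1 : ((11/10:ℝ)*BB)^k ≤ AA^k := by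
      refine pow_le_pow_left₀ (mul_nonneg (by norm_num) hB0.le) ?_ k
      nlinarith [hB1u, hA1l]
    have h2 : (1 + (k:ℝ)*(1/10)) ≤ ((11/10:ℝ))^k := by
      have h := one_add_mul_le_pow (by norm_num : (-2:ℝ) ≤ (1/10:ℝ)) k
      calc (1 + (k:ℝ)*(1/10)) ≤ (1+(1/10:ℝ))^k := h
        _ = ((11/10:ℝ))^k := by norm_num
    calc (1 + (k:ℝ)/10) * BB^k ≤ ((11/10:ℝ))^k * BB^k := by
          refine mul_le_mul_of_nonneg_right ?_ hV.le
          linarith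
      _ = ((11/10:ℝ)*BB)^k := (mul_pow _ _ _).symm
      _ ≤ AA^k := h1
  push_cast
  nlinarith [mul_le_mul_of_nonneg_right hXY (by norm_num : (0:ℝ) ≤ 2000000),
    hU.le, hV.le, hk, hkV,
    mul_lt_mul_of_pos_right hA2l hU, mul_lt_mul_of_pos_right hA1u hU,
    mul_lt_mul_of_pos_right hA3u hU, mul_lt_mul_of_pos_right hA2u hU,
    mul_lt_mul_of_pos_right hB1u hV, mul_lt_mul_of_pos_right hB2l hV,
    mul_lt_mul_of_pos_right hB2u hV, mul_lt_mul_of_pos_right hB3u hV,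
    mul_le_mul_of_nonneg_left hB1u.le hkV, mul_le_mul_of_nonneg_left hB2u.le hkV,
    mul_le_mul_of_nonneg_left hB2l.le hkV, mul_le_mul_of_nonneg_left hB3u.le hkV]


set_option maxHeartbeats 3000000 in
theorem ineq_pendant_one (n r : ℕ) (hn : 14 ≤ n) (hr : r ∈ ({4, 5, 6} : Set ℕ))
    (h : 1 ≤ n - r - 2) :
    ((r - 1).choose 2 : ℝ) * f (n - r) + ((r : ℝ) - 1) * f (n - r - 1) + g (n - r - 2)
      < f n := by
  have hr' : r = 4 ∨ r = 5 ∨ r = 6 := by simpa using hr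
  rcases le_or_gt n 37 with h37 | h37
  · rcases hr' with rfl | rfl | rfl <;>
      interval_cases n <;>
      norm_num [Nat.choose, fval7, fval8, fval9, fval10, fval11, fval12, fval13, fval14, fval15, fval16, fval17, fval18, fval19, fval20, fval21, fval22, fval23, fval24, fval25, fval26, fval27, fval28, fval29, fval30, fval31, fval32, fval33, fval34, fval35, fval36, fval37, gval6, gval7, gval8, gval9, gval10, gval11, gval12, gval13, gval14, gval15, gval16, gval17, gval18, gval19, gval20, gval21, gval22, gval23, gval24, gval25, gval26, gval27, gval28, gval29, gval30, gval31] <;>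
      linarith [hA1l, hA1u, hA2l, hA2u, hA3l, hA3u, hA4l, hA4u, hB1l, hB1u, hB2l, hB2u, hB3l, hB3u, hB4l, hB4u]
  · rcases hr' with rfl | rfl | rfl
    · have hg := gen4 n (by omega)
      norm_num [Nat.choose]
      linarith [hg]
    · have hg := gen5 n (by omega)
      norm_num [Nat.choose]
      linarith [hg]
    · have hg := gen6 n (by omega)
      norm_num [Nat.choose]
      linarith [hg]
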